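/- Let T be a transit cluster in a DAG G with rec(T) ≠ ∅ and em(T) ≠ ∅, and let G⁺ be obtained from G by adding two new vertices t_{k+1} and t_{k+2}, edges from every external parent of rec(T) to t_{k+1}, edges from t_{k+2} to every external child of em(T), and the edge t_{k+1} → t_{k+2}. Then T⁺ = T ∪ {t_{k+1}, t_{k+2}} is a transit cluster in G⁺, and clustering T⁺ in G⁺ yields the same graph as clustering T in G. -/

import Mathlib

variable {α : Type*}

/-- All edges lie within the vertex set `V`. -/
def EdgesIn (V : Set α) (E : α → α → Prop) : Prop :=
  ∀ u v, E u v → u ∈ V ∧ v ∈ V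

/-- The edge relation has no directed cycles. -/
def Acyclic (E : α → α → Prop) : Prop :=
  ∀ v, ¬ Relation.TransGen E v v

/-- A finite directed acyclic graph on vertex set `V`. -/
def IsDAG (V : Set α) (E : α → α → Prop) : Prop :=
  V.Finite ∧ EdgesIn V E ∧ Acyclic E

/-- Receivers of `T`: members of `T` with a parent outside `T`. -/
def recs (E : α → α → Prop) (T : Set α) : Set α :=
  {v | v ∈ T ∧ ∃ u, u ∉ T ∧ E u v}

/-- Emitters of `T`: members of `T` with a child outside `T`. -/
def emis (E : α → α → Prop) (T : Set α) : Set α :=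
  {v | v ∈ T ∧ ∃ u, u ∉ T ∧ E v u}

/-- Edges of `G[T^=]`: the subgraph induced by `T` with incoming edges of
receivers and outgoing edges of emitters removed. -/
def CutEdge (E : α → α → Prop) (T : Set α) (u v : α) : Prop :=
  u ∈ T ∧ v ∈ T ∧ E u v ∧ v ∉ recs E T ∧ u ∉ emis E T

/-- Undirected reachability with respect to an edge relation. -/
def UndirReach (E : α → α → Prop) (u v : α) : Prop :=
  Relation.ReflTransGen (fun a b => E a b ∨ E b a) u v

/-- `T` is a transit cluster in the graph `(V, E)`. -/
def IsTransitCluster (V : Set α) (E : α → α → Prop) (T : Set α) : Prop :=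
  T.Nonempty ∧ T ⊂ V ∧
  (∀ r₁ ∈ recs E T, ∀ r₂ ∈ recs E T,
    {u | u ∉ T ∧ E u r₁} = {u | u ∉ T ∧ E u r₂}) ∧
  (∀ e₁ ∈ emis E T, ∀ e₂ ∈ emis E T,
    {u | u ∉ T ∧ E e₁ u} = {u | u ∉ T ∧ E e₂ u}) ∧
  (∀ x ∈ T, ∃ w, (w ∈ recs E T ∨ w ∈ emis E T) ∧ UndirReach (CutEdge E T) x w) ∧
  ((emis E T).Nonempty → ∀ r ∈ recs E T, ∃ e ∈ emis E T, Relation.ReflTransGen E r e) ∧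
  ((recs E T).Nonempty → ∀ e ∈ emis E T, ∃ r ∈ recs E T, Relation.ReflTransGen E r e)

/-- Vertex set of the graph obtained by clustering `T` into the new vertex `t`. -/
def ClusterVerts (V T : Set α) (t : α) : Set α := (V \ T) ∪ {t}

/-- Edge relation of the graph obtained by clustering `T` into the new vertex `t`:
edges not touching `T` are kept, the parents of `t` are the external parents of
`recs T`, and the children of `t` are the external children of `emis T`. -/
def ClusterEdge (E : α → α → Prop) (T : Set α) (t : α) (u v : α) : Prop :=
  (u ∉ T ∧ v ∉ T ∧ E u v) ∨
  (u ∉ T ∧ u ≠ t ∧ v = t ∧ ∃ r ∈ recs E T, E u r) ∨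
  (u = t ∧ v ∉ T ∧ v ≠ t ∧ ∃ e ∈ emis E T, E e v)

/-- A transit component: a transit cluster that is connected (undirectedly)
in the subgraph it induces. -/
def IsTransitComponent (V : Set α) (E : α → α → Prop) (T : Set α) : Prop :=
  IsTransitCluster V E T ∧
  ∀ u ∈ T, ∀ v ∈ T, UndirReach (fun a b => a ∈ T ∧ b ∈ T ∧ E a b) u v

/-- External parents of the receivers of `T`. -/
def ExtPa (E : α → α → Prop) (T : Set α) : Set α :=
  {u | u ∉ T ∧ ∃ r ∈ recs E T, E u r}

/-- External children of the emitters of `T`. -/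
def ExtCh (E : α → α → Prop) (T : Set α) : Set α :=
  {v | v ∉ T ∧ ∃ e ∈ emis E T, E e v}

/-- The edge relation obtained by adding a new receiver `w₁` and a new emitter
`w₂`: edges from every external parent of `recs T` to `w₁`, from `w₂` to every
external child of `emis T`, and the edge `w₁ → w₂`. -/
def PairExtEdge (E : α → α → Prop) (T : Set α) (w₁ w₂ : α) : α → α → Prop :=
  fun u v => E u v ∨ (u ∈ ExtPa E T ∧ v = w₁) ∨ (u = w₂ ∧ v ∈ ExtCh E T) ∨
    (u = w₁ ∧ v = w₂)

/-- peripheral extension, operation 8 (adding a receiver-emitter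
pair). -/
theorem peripheral_add_receiver_emitter
    (V : Set α) (E : α → α → Prop) (T : Set α) (w₁ w₂ t : α)
    (hdag : IsDAG V E)
    (hT : IsTransitCluster V E T)
    (hrec : (recs E T).Nonempty)
    (hemi : (emis E T).Nonempty)
    (hw1 : w₁ ∉ V) (hw2 : w₂ ∉ V) (hne : w₁ ≠ w₂)
    (ht : t ∉ V) (htw1 : t ≠ w₁) (htw2 : t ≠ w₂) :
    IsTransitCluster (V ∪ {w₁, w₂}) (PairExtEdge E T w₁ w₂) (T ∪ {w₁, w₂}) ∧
    ClusterVerts (V ∪ {w₁, w₂}) (T ∪ {w₁, w₂}) t = ClusterVerts V T t ∧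
    ClusterEdge (PairExtEdge E T w₁ w₂) (T ∪ {w₁, w₂}) t = ClusterEdge E T t := by
  obtain ⟨hfin, hE, hacyc⟩ := hdag
  obtain ⟨hTne, hTsub, hrpar, hech, hconn, hre, her⟩ := hT
  have hTV : T ⊆ V := hTsub.1
  have hw1T : w₁ ∉ T := fun h => hw1 (hTV h)
  have hw2T : w₂ ∉ T := fun h => hw2 (hTV h)
  have hmemT' : ∀ x : α, x ∈ T ∪ ({w₁, w₂} : Set α) ↔ x ∈ T ∨ x = w₁ ∨ x = w₂ := by
    intro x; simp only [Set.mem_union, Set.mem_insert_iff, Set.mem_singleton_iff]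
  have hVnot : ∀ {x : α}, x ∈ V → x ∉ T → x ∉ T ∪ ({w₁, w₂} : Set α) := by
    intro x hxV hxT h
    rcases (hmemT' x).1 h with h | h | h
    · exact hxT h
    · exact hw1 (h ▸ hxV)
    · exact hw2 (h ▸ hxV)
  have hExtPaV : ∀ {u : α}, u ∈ ExtPa E T → u ∈ V ∧ u ∉ T := by
    rintro u ⟨huT, r, hr, hur⟩
    exact ⟨(hE _ _ hur).1, huT⟩
  have hExtChV : ∀ {v : α}, v ∈ ExtCh E T → v ∈ V ∧ v ∉ T := by
    rintro v ⟨hvT, e, he, hev⟩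
    exact ⟨(hE _ _ hev).2, hvT⟩
  have hExtPane : (ExtPa E T).Nonempty := by
    obtain ⟨r, hrT, u, huT, hur⟩ := hrec
    exact ⟨u, huT, r, ⟨hrT, u, huT, hur⟩, hur⟩
  have hExtChne : (ExtCh E T).Nonempty := by
    obtain ⟨e, heT, u, huT, heu⟩ := hemi
    exact ⟨u, huT, e, ⟨heT, u, huT, heu⟩, heu⟩
  -- receivers of the extended cluster
  have hrecs : recs (PairExtEdge E T w₁ w₂) (T ∪ {w₁, w₂}) = recs E T ∪ {w₁} := by
    ext v
    constructor
    · rintro ⟨hvT', u, huT', hedge⟩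
      rcases hedge with huv | ⟨hu, hveq⟩ | ⟨hueq, hv⟩ | ⟨hueq, hveq⟩
      · have huV := (hE _ _ huv).1
        have hvV := (hE _ _ huv).2
        have hvT : v ∈ T := by
          rcases (hmemT' v).1 hvT' with h | h | h
          · exact h
          · exact absurd (h ▸ hvV) hw1
          · exact absurd (h ▸ hvV) hw2
        have huT : u ∉ T := fun h => huT' ((hmemT' u).2 (Or.inl h))
        exact Or.inl ⟨hvT, u, huT, huv⟩
      · exact Or.inr hveq
      · exact absurd ((hmemT' u).2 (Or.inr (Or.inr hueq))) huT'
      · exact absurd ((hmemT' u).2 (Or.inr (Or.inl hueq))) huT'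
    · rintro (⟨hvT, u, huT, huv⟩ | hv1)
      · exact ⟨(hmemT' v).2 (Or.inl hvT), u, hVnot (hE _ _ huv).1 huT, Or.inl huv⟩
      · obtain ⟨u, hu⟩ := hExtPane
        obtain ⟨huV, huT⟩ := hExtPaV hu
        exact ⟨(hmemT' v).2 (Or.inr (Or.inl hv1)), u, hVnot huV huT,
          Or.inr (Or.inl ⟨hu, hv1⟩)⟩
  -- emitters of the extended cluster
  have hemis : emis (PairExtEdge E T w₁ w₂) (T ∪ {w₁, w₂}) = emis E T ∪ {w₂} := by
    ext v
    constructor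
    · rintro ⟨hvT', u, huT', hedge⟩
      rcases hedge with hvu | ⟨hv, hueq⟩ | ⟨hveq, hu⟩ | ⟨hveq, hueq⟩
      · have hvV := (hE _ _ hvu).1
        have huV := (hE _ _ hvu).2
        have hvT : v ∈ T := by
          rcases (hmemT' v).1 hvT' with h | h | h
          · exact h
          · exact absurd (h ▸ hvV) hw1
          · exact absurd (h ▸ hvV) hw2
        have huT : u ∉ T := fun h => huT' ((hmemT' u).2 (Or.inl h))
        exact Or.inl ⟨hvT, u, huT, hvu⟩
      · exact absurd ((hmemT' u).2 (Or.inr (Or.inl hueq))) huT'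
      · exact Or.inr hveq
      · exact absurd ((hmemT' u).2 (Or.inr (Or.inr hueq))) huT'
    · rintro (⟨hvT, u, huT, hvu⟩ | hv2)
      · exact ⟨(hmemT' v).2 (Or.inl hvT), u, hVnot (hE _ _ hvu).2 huT, Or.inl hvu⟩
      · obtain ⟨u, hu⟩ := hExtChne
        obtain ⟨huV, huT⟩ := hExtChV hu
        exact ⟨(hmemT' v).2 (Or.inr (Or.inr hv2)), u, hVnot huV huT,
          Or.inr (Or.inr (Or.inl ⟨hv2, hu⟩))⟩
  -- the external parents of every receiver of the extended cluster
  have hpar : ∀ r ∈ recs E T ∪ ({w₁} : Set α),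
      {u | u ∉ T ∪ ({w₁, w₂} : Set α) ∧ PairExtEdge E T w₁ w₂ u r} = ExtPa E T := by
    rintro r (hr | hreq)
    · ext u
      constructor
      · rintro ⟨huT', huv | ⟨hu, h⟩ | ⟨_, hv⟩ | ⟨_, h⟩⟩
        · exact ⟨fun h => huT' ((hmemT' u).2 (Or.inl h)), r, hr, huv⟩
        · exact absurd (h ▸ hr.1) hw1T
        · exact absurd hr.1 hv.1
        · exact absurd (h ▸ hr.1) hw2T
      · intro hu
        obtain ⟨huV, huT⟩ := hExtPaV hu
        obtain ⟨_, r', hr', hur'⟩ := hu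
        have hmem : u ∈ {x | x ∉ T ∧ E x r} := by
          rw [← hrpar r' hr' r hr]; exact ⟨huT, hur'⟩
        exact ⟨hVnot huV huT, Or.inl hmem.2⟩
    · ext u
      constructor
      · rintro ⟨huT', huv | ⟨hu, _⟩ | ⟨_, hv⟩ | ⟨_, h⟩⟩
        · exact absurd (hreq ▸ (hE _ _ huv).2) hw1
        · exact hu
        · exact absurd (hreq ▸ (hExtChV hv).1) hw1
        · exact absurd (hreq ▸ h) hne
      · intro hu
        obtain ⟨huV, huT⟩ := hExtPaV hu
        exact ⟨hVnot huV huT, Or.inr (Or.inl ⟨hu, hreq⟩)⟩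
  -- the external children of every emitter of the extended cluster
  have hchi : ∀ e ∈ emis E T ∪ ({w₂} : Set α),
      {u | u ∉ T ∪ ({w₁, w₂} : Set α) ∧ PairExtEdge E T w₁ w₂ e u} = ExtCh E T := by
    rintro e (he | heq)
    · ext u
      constructor
      · rintro ⟨huT', heu | ⟨hpa, hueq⟩ | ⟨h, hu⟩ | ⟨h, hueq⟩⟩
        · exact ⟨fun h => huT' ((hmemT' u).2 (Or.inl h)), e, he, heu⟩
        · exact absurd ((hmemT' u).2 (Or.inr (Or.inl hueq))) huT'
        · exact absurd (h ▸ he.1) hw2T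
        · exact absurd (h ▸ he.1) hw1T
      · intro hu
        obtain ⟨huV, huT⟩ := hExtChV hu
        obtain ⟨_, e', he', he'u⟩ := hu
        have hmem : u ∈ {x | x ∉ T ∧ E e x} := by
          rw [← hech e' he' e he]; exact ⟨huT, he'u⟩
        exact ⟨hVnot huV huT, Or.inl hmem.2⟩
    · ext u
      constructor
      · rintro ⟨huT', heu | ⟨hpa, _⟩ | ⟨_, hu⟩ | ⟨h, _⟩⟩
        · exact absurd (heq ▸ (hE _ _ heu).1) hw2
        · exact absurd (heq ▸ (hExtPaV hpa).1) hw2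
        · exact hu
        · exact absurd (heq ▸ h) (Ne.symm hne)
      · intro hu
        obtain ⟨huV, huT⟩ := hExtChV hu
        exact ⟨hVnot huV huT, Or.inr (Or.inr (Or.inl ⟨heq, hu⟩))⟩
  -- cut edges are preserved
  have hcut : ∀ u v, CutEdge E T u v →
      CutEdge (PairExtEdge E T w₁ w₂) (T ∪ {w₁, w₂}) u v := by
    rintro u v ⟨huT, hvT, huv, hvr, hue⟩
    refine ⟨(hmemT' u).2 (Or.inl huT), (hmemT' v).2 (Or.inl hvT), Or.inl huv, ?_, ?_⟩
    · rw [hrecs]; rintro (h | h)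
      · exact hvr h
      · exact hw1T (h ▸ hvT)
    · rw [hemis]; rintro (h | h)
      · exact hue h
      · exact hw2T (h ▸ huT)
  have hE'mono : ∀ a b, E a b → PairExtEdge E T w₁ w₂ a b := fun a b h => Or.inl h
  refine ⟨⟨?_, ?_, ?_, ?_, ?_, ?_, ?_⟩, ?_, ?_⟩
  · obtain ⟨x, hx⟩ := hTne
    exact ⟨x, Or.inl hx⟩
  · have hsub : T ∪ ({w₁, w₂} : Set α) ⊆ V ∪ {w₁, w₂} :=
      Set.union_subset_union_left _ hTV
    obtain ⟨x, hxV, hxT⟩ := Set.exists_of_ssubset hTsub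
    exact (Set.ssubset_iff_of_subset hsub).2 ⟨x, Or.inl hxV, hVnot hxV hxT⟩
  · intro r₁ hr₁ r₂ hr₂
    rw [hrecs] at hr₁ hr₂
    rw [hpar r₁ hr₁, hpar r₂ hr₂]
  · intro e₁ he₁ e₂ he₂
    rw [hemis] at he₁ he₂
    rw [hchi e₁ he₁, hchi e₂ he₂]
  · intro x hx
    rcases (hmemT' x).1 hx with hxT | hx1 | hx2
    · obtain ⟨w, hw, hreach⟩ := hconn x hxT
      refine ⟨w, ?_, ?_⟩
      · rcases hw with h | h
        · exact Or.inl (by rw [hrecs]; exact Or.inl h)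
        · exact Or.inr (by rw [hemis]; exact Or.inl h)
      · exact Relation.ReflTransGen.mono
          (fun a b (hab : CutEdge E T a b ∨ CutEdge E T b a) => hab.imp (hcut a b) (hcut b a)) _ _ hreach
    · exact ⟨x, Or.inl (by rw [hrecs]; exact Or.inr hx1), Relation.ReflTransGen.refl⟩
    · exact ⟨x, Or.inr (by rw [hemis]; exact Or.inr hx2), Relation.ReflTransGen.refl⟩
  · intro _ r hr
    rw [hrecs] at hr
    rcases hr with hr | hr1
    · obtain ⟨e, he, hpath⟩ := hre hemi r hr
      exact ⟨e, by rw [hemis]; exact Or.inl he, Relation.ReflTransGen.mono hE'mono _ _ hpath⟩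
    · exact ⟨w₂, by rw [hemis]; exact Or.inr rfl,
        Relation.ReflTransGen.single (Or.inr (Or.inr (Or.inr ⟨hr1, rfl⟩)))⟩
  · intro _ e he
    rw [hemis] at he
    rcases he with he | he2
    · obtain ⟨r, hr, hpath⟩ := her hrec e he
      exact ⟨r, by rw [hrecs]; exact Or.inl hr, Relation.ReflTransGen.mono hE'mono _ _ hpath⟩
    · exact ⟨w₁, by rw [hrecs]; exact Or.inr rfl,
        Relation.ReflTransGen.single (Or.inr (Or.inr (Or.inr ⟨rfl, he2⟩)))⟩
  · -- vertices of the clustered graphs agree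
    have hdiff : (V ∪ ({w₁, w₂} : Set α)) \ (T ∪ {w₁, w₂}) = V \ T := by
      ext x
      constructor
      · rintro ⟨hxV | hx, hxT'⟩
        · exact ⟨hxV, fun h => hxT' ((hmemT' x).2 (Or.inl h))⟩
        · exact absurd (Set.mem_union_right _ hx) hxT'
      · rintro ⟨hxV, hxT⟩
        exact ⟨Or.inl hxV, hVnot hxV hxT⟩
    unfold ClusterVerts
    rw [hdiff]
  · -- edges of the clustered graphs agree
    funext u v
    apply propext
    constructor
    · rintro (⟨huT', hvT', hedge⟩ | ⟨huT', hut, hvt', r, hr, hedge⟩ |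
        ⟨hut', hvT', hvt, e, he, hedge⟩)
      · rcases hedge with huv | ⟨hu, hveq⟩ | ⟨hueq, hv⟩ | ⟨hueq, hveq⟩
        · exact Or.inl ⟨fun h => huT' ((hmemT' u).2 (Or.inl h)),
            fun h => hvT' ((hmemT' v).2 (Or.inl h)), huv⟩
        · exact absurd ((hmemT' v).2 (Or.inr (Or.inl hveq))) hvT'
        · exact absurd ((hmemT' u).2 (Or.inr (Or.inr hueq))) huT'
        · exact absurd ((hmemT' u).2 (Or.inr (Or.inl hueq))) huT'
      · rw [hrecs] at hr
        have hu : u ∈ ExtPa E T := by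
          rw [← hpar r hr]; exact ⟨huT', hedge⟩
        obtain ⟨huT, r', hr', hur'⟩ := hu
        exact Or.inr (Or.inl ⟨huT, hut, hvt', r', hr', hur'⟩)
      · rw [hemis] at he
        have hv : v ∈ ExtCh E T := by
          rw [← hchi e he]; exact ⟨hvT', hedge⟩
        obtain ⟨hvT, e', he', he'v⟩ := hv
        exact Or.inr (Or.inr ⟨hut', hvT, hvt, e', he', he'v⟩)
    · rintro (⟨huT, hvT, huv⟩ | ⟨huT, hut, hvt', r, hr, hur⟩ |
        ⟨hut', hvT, hvt, e, he, hev⟩)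
      · exact Or.inl ⟨hVnot (hE _ _ huv).1 huT, hVnot (hE _ _ huv).2 hvT, Or.inl huv⟩
      · exact Or.inr (Or.inl ⟨hVnot (hE _ _ hur).1 huT, hut, hvt', r,
          by rw [hrecs]; exact Or.inl hr, Or.inl hur⟩)
      · exact Or.inr (Or.inr ⟨hut', hVnot (hE _ _ hev).2 hvT, hvt, e,
          by rw [hemis]; exact Or.inl he, Or.inl hev⟩)
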